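/- (Fermionic rigid ideal gas cools down faster: sign of the Amari–Chentsov component.) Let k > 0, κ > 0, a ≥ 1, μ < 0, T > 0, and set ξ := exp(μ / (k T)) ∈ (0,1) and L_b := ∑_{n=1}^∞ (−1)ⁿ ξⁿ / n^b (the polylogarithm Li_b(−ξ)). Then the fermionic Amari–Chentsov component C := −κ · k^{a−1} · T^{a−4} · Γ(a+1) · ( μ³ · L_{a−1} + a k T · ( (a+1) k T · ( 3 μ · L_{a+1} − (a+2) k T · L_{a+2} ) − 3 μ² · L_a ) ) is strictly negative, where Γ is the real Gamma function. -/

import Mathlib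

lemma polylog_neg_aux (ξ : ℝ) (h0 : 0 < ξ) (h1 : ξ < 1) (b : ℝ) (hb : 0 ≤ b) :
    (∑' n : ℕ, (-1 : ℝ) ^ (n + 1) * ξ ^ (n + 1) / ((n : ℝ) + 1) ^ b) < 0 := by
  set f : ℕ → ℝ := fun n => (-1 : ℝ) ^ (n + 1) * ξ ^ (n + 1) / ((n : ℝ) + 1) ^ b with hf
  have hden : ∀ n : ℕ, (1 : ℝ) ≤ ((n : ℝ) + 1) ^ b := by
    intro n
    have h2 : (1 : ℝ) ≤ (n : ℝ) + 1 := by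
      have := Nat.cast_nonneg (α := ℝ) n; linarith
    calc (1 : ℝ) = (1 : ℝ) ^ b := (Real.one_rpow b).symm
    _ ≤ ((n : ℝ) + 1) ^ b := Real.rpow_le_rpow zero_le_one h2 hb
  have hdenpos : ∀ n : ℕ, (0 : ℝ) < ((n : ℝ) + 1) ^ b := fun n =>
    lt_of_lt_of_le one_pos (hden n)
  have hsum : Summable f := by
    apply Summable.of_norm_bounded (g := fun n => ξ ^ n)
      (summable_geometric_of_lt_one h0.le h1)
    intro n
    have hn : ‖f n‖ = ξ ^ (n + 1) / ((n : ℝ) + 1) ^ b := by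
      rw [hf, Real.norm_eq_abs, abs_div, abs_mul, abs_pow, abs_neg, abs_one, one_pow,
        one_mul, abs_of_nonneg (pow_nonneg h0.le _), abs_of_pos (hdenpos n)]
    rw [hn]
    calc ξ ^ (n + 1) / ((n : ℝ) + 1) ^ b ≤ ξ ^ (n + 1) / 1 :=
          div_le_div_of_nonneg_left (pow_nonneg h0.le _) one_pos (hden n)
    _ = ξ ^ (n + 1) := div_one _
    _ ≤ ξ ^ n := pow_le_pow_of_le_one h0.le h1.le (Nat.le_succ n)
  have hse : Summable (fun k : ℕ => f (2 * k)) :=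
    hsum.comp_injective (fun x y h => by omega)
  have hso : Summable (fun k : ℕ => f (2 * k + 1)) :=
    hsum.comp_injective (fun x y h => by omega)
  have hsplit := tsum_even_add_odd hse hso
  rw [← hsplit]
  have heven : ∀ k : ℕ, f (2 * k) = -(ξ ^ (2 * k + 1) / ((2 * (k : ℝ)) + 1) ^ b) := by
    intro k
    have hpow : ((-1 : ℝ)) ^ (2 * k + 1) = -1 := Odd.neg_one_pow ⟨k, by ring⟩
    simp only [hf, hpow]
    push_cast
    ring
  have hodd : ∀ k : ℕ, f (2 * k + 1) = ξ ^ (2 * k + 2) / ((2 * (k : ℝ)) + 2) ^ b := by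
    intro k
    have hpow : ((-1 : ℝ)) ^ (2 * k + 1 + 1) = 1 := Even.neg_one_pow ⟨k + 1, by ring⟩
    simp only [hf, hpow]
    push_cast
    ring
  have hle : ∀ k : ℕ, f (2 * k + 1) ≤ -(f (2 * k)) := by
    intro k
    rw [heven, hodd, neg_neg]
    have hd1 : (0 : ℝ) < (2 * (k : ℝ) + 1) ^ b := by
      apply Real.rpow_pos_of_pos; positivity
    have hdd : (2 * (k : ℝ) + 1) ^ b ≤ (2 * (k : ℝ) + 2) ^ b :=
      Real.rpow_le_rpow (by positivity) (by linarith) hb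
    apply div_le_div₀ (pow_nonneg h0.le _) _ hd1 hdd
    exact pow_le_pow_of_le_one h0.le h1.le (by omega)
  have hlt0 : f (2 * 0 + 1) < -(f (2 * 0)) := by
    rw [heven, hodd, neg_neg]
    norm_num
    have h2b : (1 : ℝ) ≤ (2 : ℝ) ^ b := by
      calc (1 : ℝ) = (1 : ℝ) ^ b := (Real.one_rpow b).symm
      _ ≤ (2 : ℝ) ^ b := Real.rpow_le_rpow zero_le_one one_le_two hb
    have h2bpos : (0 : ℝ) < (2 : ℝ) ^ b := lt_of_lt_of_le one_pos h2b
    rw [div_lt_iff₀ h2bpos]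
    nlinarith
  have hlt : (∑' k : ℕ, f (2 * k + 1)) < ∑' k : ℕ, -(f (2 * k)) :=
    Summable.tsum_lt_tsum hle hlt0 hso hse.neg
  have hneg : (∑' k : ℕ, -(f (2 * k))) = -(∑' k : ℕ, f (2 * k)) := by
    exact tsum_neg
  rw [hneg] at hlt
  linarith

theorem fermionic_amari_chentsov_component_neg
    (k κ a μ T : ℝ) (hk : 0 < k) (hκ : 0 < κ) (ha : 1 ≤ a)
    (hμ : μ < 0) (hT : 0 < T)
    (ξ : ℝ) (hξ : ξ = Real.exp (μ / (k * T)))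
    (L : ℝ → ℝ)
    (hL : ∀ b : ℝ, L b = ∑' n : ℕ, (-1 : ℝ) ^ (n + 1) * ξ ^ (n + 1) / ((n : ℝ) + 1) ^ b)
    (C : ℝ)
    (hC : C = -(κ * k ^ (a - 1) * T ^ (a - 4) * Real.Gamma (a + 1) *
      (μ ^ 3 * L (a - 1) +
        a * k * T * ((a + 1) * k * T *
          (3 * μ * L (a + 1) - (a + 2) * k * T * L (a + 2)) -
          3 * μ ^ 2 * L a)))) :
    C < 0 := by
  have hξ0 : 0 < ξ := hξ ▸ Real.exp_pos _
  have hξ1 : ξ < 1 := by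
    rw [hξ, Real.exp_lt_one_iff]
    exact div_neg_of_neg_of_pos hμ (by positivity)
  have hLneg : ∀ b : ℝ, 0 ≤ b → L b < 0 := fun b hb =>
    (hL b) ▸ polylog_neg_aux ξ hξ0 hξ1 b hb
  have hL1 : L (a - 1) < 0 := hLneg _ (by linarith)
  have hL2 : L a < 0 := hLneg _ (by linarith)
  have hL3 : L (a + 1) < 0 := hLneg _ (by linarith)
  have hL4 : L (a + 2) < 0 := hLneg _ (by linarith)
  have hP : 0 < κ * k ^ (a - 1) * T ^ (a - 4) * Real.Gamma (a + 1) := by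
    have := Real.Gamma_pos_of_pos (show (0:ℝ) < a + 1 by linarith)
    have := Real.rpow_pos_of_pos hk (a - 1)
    have := Real.rpow_pos_of_pos hT (a - 4)
    positivity
  have hμ2 : 0 < μ ^ 2 := by nlinarith
  have hμ3 : μ ^ 3 < 0 := by nlinarith
  have hA : 0 < μ ^ 3 * L (a - 1) := mul_pos_of_neg_of_neg hμ3 hL1
  have hB : 0 < 3 * μ * L (a + 1) := by
    have := mul_pos_of_neg_of_neg (show 3 * μ < 0 by linarith) hL3
    linarith
  have h3 : (a + 2) * k * T * L (a + 2) < 0 :=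
    mul_neg_of_pos_of_neg (by positivity) hL4
  have h4 : 3 * μ ^ 2 * L a < 0 :=
    mul_neg_of_pos_of_neg (by positivity) hL2
  have hinner1 : 0 < 3 * μ * L (a + 1) - (a + 2) * k * T * L (a + 2) := by linarith
  have hinner2 : 0 < (a + 1) * k * T *
      (3 * μ * L (a + 1) - (a + 2) * k * T * L (a + 2)) :=
    mul_pos (by positivity) hinner1
  have hinner3 : 0 < (a + 1) * k * T *
      (3 * μ * L (a + 1) - (a + 2) * k * T * L (a + 2)) - 3 * μ ^ 2 * L a := by linarith
  have htot : 0 < a * k * T * ((a + 1) * k * T *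
      (3 * μ * L (a + 1) - (a + 2) * k * T * L (a + 2)) - 3 * μ ^ 2 * L a) :=
    mul_pos (by positivity) hinner3
  have hE : 0 < μ ^ 3 * L (a - 1) +
      a * k * T * ((a + 1) * k * T *
        (3 * μ * L (a + 1) - (a + 2) * k * T * L (a + 2)) -
        3 * μ ^ 2 * L a) := by linarith
  rw [hC]
  have := mul_pos hP hE
  linarith
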